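/- Let d ≤ n be natural numbers and let A ⊆ F_2^n. If |A| > 2·C(n, ≤ ⌊d/2⌋), then int-deg(A + A) > d, where A + A = {a + b : a, b ∈ A} is the sumset of A in F_2^n. -/

import Mathlib

open Pointwise

/-- If `|A| > 2 · C(n, ≤ ⌊d/2⌋)` then the interpolation degree of the sumset
`A + A ⊆ 𝔽₂ⁿ` is greater than `d`: some function on `A + A` cannot be computed on
`A + A` by any multilinear polynomial of total degree at most `d`. -/
theorem int_deg_sumset_gt (n d : ℕ) (hdn : d ≤ n) (A : Finset (Fin n → ZMod 2))
    (hA : A.card > 2 * ∑ i ∈ Finset.range (d / 2 + 1), n.choose i) :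
    ∃ f : (Fin n → ZMod 2) → ZMod 2,
      ¬ ∃ P : MvPolynomial (Fin n) (ZMod 2),
          (∀ i, P.degreeOf i ≤ 1) ∧ P.totalDegree ≤ d ∧
          ∀ a ∈ A + A, MvPolynomial.eval a P = f a := by
  classical
  have hzz0 : ∀ x y : ZMod 2, x + y = 0 ↔ y = x := by decide
  haveI : Fact (Nat.Prime 2) := ⟨by norm_num⟩
  set h := d / 2 with hh
  refine ⟨fun x => if x = 0 then 1 else 0, ?_⟩
  rintro ⟨P, hmul, hdeg, hP⟩
  -- each exponent in each monomial of `P` is at most 1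
  have hSle : ∀ S ∈ P.support, ∀ i, S i ≤ 1 := by
    intro S hS i
    refine le_trans ?_ (hmul i)
    rw [MvPolynomial.degreeOf_eq_sup]
    exact Finset.le_sup (f := fun m => m i) hS
  -- the number of variables in each monomial of `P` is at most `d`
  have hScard : ∀ S ∈ P.support, S.support.card ≤ d := by
    intro S hS
    have h1 : S.support.card ≤ S.sum fun _ e => e := by
      rw [Finsupp.sum]
      calc S.support.card = ∑ _i ∈ S.support, 1 := by simp
        _ ≤ ∑ i ∈ S.support, S i := by
            apply Finset.sum_le_sum
            intro i hi
            exact Nat.one_le_iff_ne_zero.mpr (Finsupp.mem_support_iff.mp hi)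
    exact le_trans h1 (le_trans (MvPolynomial.le_totalDegree hS) hdeg)
  have hd2 : d ≤ 2 * h + 1 := by omega
  have hzz : ∀ x y : ZMod 2, x + y = 0 ↔ y = x := hzz0
  -- evaluation of `P` as a sum of products over supports
  have evalP : ∀ x : Fin n → ZMod 2,
      MvPolynomial.eval x P = ∑ S ∈ P.support, P.coeff S * ∏ i ∈ S.support, x i := by
    intro x
    rw [MvPolynomial.eval_eq]
    refine Finset.sum_congr rfl fun S hS => ?_
    congr 1
    refine Finset.prod_congr rfl fun i hi => ?_
    have h1 : S i = 1 :=
      le_antisymm (hSle S hS i) (Nat.one_le_iff_ne_zero.mpr (Finsupp.mem_support_iff.mp hi))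
    rw [h1, pow_one]
  -- the module of functions on `A`
  set mon : Finset (Fin n) → (Fin n → ZMod 2) → ZMod 2 := fun T x => ∏ i ∈ T, x i with hmon
  set Ts : Finset (Finset (Fin n)) := Finset.univ.filter fun T => T.card ≤ h with hTsdef
  set GF : Finset (Fin n) → (↥A → ZMod 2) := fun T b =>
    ∑ S ∈ P.support, if T ⊆ S.support then P.coeff S * mon (S.support \ T) ↑b else 0 with hGF
  set MF : Finset (Fin n) → (↥A → ZMod 2) := fun U b => mon U ↑b with hMF
  set s : Finset (↥A → ZMod 2) := Ts.image GF ∪ Ts.image MF with hs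
  -- key: every delta function lies in the span of `s`
  have key : ∀ a : ↥A, Pi.single a (1 : ZMod 2) ∈ Submodule.span (ZMod 2) (s : Set (↥A → ZMod 2)) := by
    intro a
    have hfun : Pi.single a (1 : ZMod 2) =
        (∑ T ∈ Ts, mon T ↑a • GF T) +
        ∑ S ∈ P.support, ∑ T ∈ S.support.powerset.filter (fun T => ¬ T.card ≤ h),
          (P.coeff S * mon T ↑a) • MF (S.support \ T) := by
      funext b
      have hmem : ((a : Fin n → ZMod 2) + (b : Fin n → ZMod 2)) ∈ A + A := Finset.add_mem_add a.2 b.2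
      have hiff : ((a : Fin n → ZMod 2) + (b : Fin n → ZMod 2) = 0) ↔ b = a := by
        constructor
        · intro hc
          exact Subtype.ext (funext fun i => (hzz _ _).mp (congrFun hc i))
        · rintro rfl
          funext i
          exact (hzz _ _).mpr rfl
      have lhs : (Pi.single a (1 : ZMod 2) : ↥A → ZMod 2) b = MvPolynomial.eval ((a : Fin n → ZMod 2) + (b : Fin n → ZMod 2)) P := by
        rw [hP _ hmem]
        simp only [Pi.single_apply, hiff]
      have step1 : MvPolynomial.eval ((a : Fin n → ZMod 2) + (b : Fin n → ZMod 2)) P =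
          ∑ S ∈ P.support, ∑ T ∈ S.support.powerset,
            P.coeff S * (mon T ↑a * mon (S.support \ T) ↑b) := by
        rw [evalP]
        refine Finset.sum_congr rfl fun S _ => ?_
        have : ∏ i ∈ S.support, ((a : Fin n → ZMod 2) + (b : Fin n → ZMod 2)) i
            = ∏ i ∈ S.support, ((a : Fin n → ZMod 2) i + (b : Fin n → ZMod 2) i) :=
          Finset.prod_congr rfl fun i _ => rfl
        rw [this, Finset.prod_add, Finset.mul_sum]
      rw [lhs, step1]
      have split : ∀ S : Fin n →₀ ℕ,
          ∑ T ∈ S.support.powerset, P.coeff S * (mon T ↑a * mon (S.support \ T) ↑b)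
          = (∑ T ∈ S.support.powerset.filter (fun T => T.card ≤ h),
              P.coeff S * (mon T ↑a * mon (S.support \ T) ↑b))
          + ∑ T ∈ S.support.powerset.filter (fun T => ¬ T.card ≤ h),
              P.coeff S * (mon T ↑a * mon (S.support \ T) ↑b) :=
        fun S => (Finset.sum_filter_add_sum_filter_not _ _ _).symm
      rw [Finset.sum_congr rfl fun S _ => split S, Finset.sum_add_distrib]
      have group1 :
          ∑ S ∈ P.support, ∑ T ∈ S.support.powerset.filter (fun T => T.card ≤ h),
            P.coeff S * (mon T ↑a * mon (S.support \ T) ↑b)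
          = ∑ T ∈ Ts, mon T ↑a * GF T b := by
        have e1 : ∀ T, mon T ↑a * GF T b
            = ∑ S ∈ P.support,
                if T ⊆ S.support then P.coeff S * (mon T ↑a * mon (S.support \ T) ↑b) else 0 := by
          intro T
          rw [hGF]
          simp only [Finset.mul_sum, mul_ite, mul_zero]
          exact Finset.sum_congr rfl fun S _ => by split <;> ring_nf
        rw [Finset.sum_congr rfl fun T _ => e1 T, Finset.sum_comm]
        refine Finset.sum_congr rfl fun S _ => ?_
        rw [← Finset.sum_filter]
        refine Finset.sum_congr ?_ fun T _ => rfl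
        ext T
        simp [hTsdef, and_comm]
      rw [group1]
      simp only [Pi.add_apply, Finset.sum_apply, Pi.smul_apply, smul_eq_mul]
      congr 1
      refine Finset.sum_congr rfl fun S _ => Finset.sum_congr rfl fun T _ => ?_
      rw [hMF]
      ring
    rw [hfun]
    refine Submodule.add_mem _ ?_ ?_
    · refine Submodule.sum_mem _ fun T hT => Submodule.smul_mem _ _ (Submodule.subset_span ?_)
      simp only [hs, Finset.coe_union, Set.mem_union, Finset.coe_image, Set.mem_image]
      exact Or.inl ⟨T, by simpa using hT, rfl⟩
    · refine Submodule.sum_mem _ fun S hS => Submodule.sum_mem _ fun T hT =>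
        Submodule.smul_mem _ _ (Submodule.subset_span ?_)
      simp only [hs, Finset.coe_union, Set.mem_union, Finset.coe_image, Set.mem_image]
      refine Or.inr ⟨S.support \ T, ?_, rfl⟩
      simp only [hTsdef, Finset.mem_coe, Finset.mem_filter, Finset.mem_univ, true_and]
      rw [Finset.mem_filter, Finset.mem_powerset] at hT
      have h1 : (S.support \ T).card = S.support.card - T.card :=
        Finset.card_sdiff_of_subset hT.1
      have h2 : T.card ≤ S.support.card := Finset.card_le_card hT.1
      have h3 := hScard S hS
      omega
  -- the span of `s` is everything
  have hspan : Submodule.span (ZMod 2) (s : Set (↥A → ZMod 2)) = ⊤ := by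
    rw [eq_top_iff, ← (Pi.basisFun (ZMod 2) ↥A).span_eq]
    refine Submodule.span_le.mpr ?_
    rintro _ ⟨i, rfl⟩
    simpa [Pi.basisFun_apply] using key i
  -- dimension count
  have hrank : A.card ≤ s.card := by
    have h1 := finrank_span_finset_le_card (R := ZMod 2) s
    rw [Set.finrank, hspan, finrank_top] at h1
    rwa [Module.finrank_fintype_fun_eq_card, Fintype.card_coe] at h1
  have hTscard : Ts.card ≤ ∑ i ∈ Finset.range (h + 1), n.choose i := by
    have hsub : Ts ⊆ (Finset.range (h + 1)).biUnion
        fun i => Finset.powersetCard i (Finset.univ : Finset (Fin n)) := by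
      intro T hT
      rw [Finset.mem_biUnion]
      rw [hTsdef, Finset.mem_filter] at hT
      exact ⟨T.card, Finset.mem_range.mpr (Nat.lt_succ_of_le hT.2),
        Finset.mem_powersetCard.mpr ⟨Finset.subset_univ T, rfl⟩⟩
    calc Ts.card ≤ _ := Finset.card_le_card hsub
      _ ≤ ∑ i ∈ Finset.range (h + 1),
            (Finset.powersetCard i (Finset.univ : Finset (Fin n))).card :=
          Finset.card_biUnion_le
      _ = ∑ i ∈ Finset.range (h + 1), n.choose i := by
          refine Finset.sum_congr rfl fun i _ => ?_
          rw [Finset.card_powersetCard, Finset.card_univ, Fintype.card_fin]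
  have hscard : s.card ≤ 2 * ∑ i ∈ Finset.range (h + 1), n.choose i := by
    calc s.card ≤ (Ts.image GF).card + (Ts.image MF).card := Finset.card_union_le _ _
      _ ≤ Ts.card + Ts.card := Nat.add_le_add (Finset.card_image_le) (Finset.card_image_le)
      _ ≤ _ := by omega
  omega
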